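/- Let (X, μ) be a standard Borel probability space and let G be a group acting on X by measurable, measure-preserving bijections. Let Y be a standard Borel space, π : X → Y a measurable map with π(g·x) = π(x) for all g ∈ G and x ∈ X, let ν = π_*μ, and let (κ_y)_{y∈Y} be a disintegration of μ over π such that for ν-a.e. y the measure κ_y is G-invariant and G-ergodic. Then the G-action on (X, μ) is ergodic if and only if the relatively independent self-joining θ of μ over π equals the product measure μ × μ. -/

import Mathlib

open MeasureTheory Filter Set
open scoped ENNReal NNReal symmDiff

/-- With respect to a zero-one probability measure, every bounded measurable
`ℝ≥0∞`-valued function is a.e. equal to its integral. -/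
lemma aeconst_of_zeroOne {Y : Type*} [MeasurableSpace Y] (ν : Measure Y)
    [IsProbabilityMeasure ν]
    (h01 : ∀ B : Set Y, MeasurableSet B → ν B = 0 ∨ ν B = 1)
    {f : Y → ℝ≥0∞} (hf : Measurable f) (hf1 : ∀ y, f y ≤ 1) :
    f =ᵐ[ν] fun _ => ∫⁻ y, f y ∂ν := by
  set c := ∫⁻ y, f y ∂ν with hc
  have hc1 : c ≤ 1 := by
    calc c ≤ ∫⁻ _, 1 ∂ν := lintegral_mono hf1
    _ = 1 := by simp
  -- upper part
  have hup : ν {y | c < f y} = 0 := by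
    have hsub : {y | c < f y} ⊆ ⋃ q : ℚ,
        {y | c < (Real.toNNReal q : ℝ≥0∞) ∧ (Real.toNNReal q : ℝ≥0∞) ≤ f y} := by
      intro y hy
      obtain ⟨q, _, hq1, hq2⟩ := ENNReal.lt_iff_exists_rat_btwn.1 hy
      exact mem_iUnion.2 ⟨q, hq1, hq2.le⟩
    refine measure_mono_null hsub (measure_iUnion_null fun q => ?_)
    by_cases hcq : c < (Real.toNNReal q : ℝ≥0∞)
    · have hm : MeasurableSet {y | (Real.toNNReal q : ℝ≥0∞) ≤ f y} :=
        measurableSet_le measurable_const hf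
      rcases h01 _ hm with h0 | h1
      · refine measure_mono_null (fun y hy => hy.2) h0
      · exfalso
        have := mul_meas_ge_le_lintegral₀ (μ := ν) hf.aemeasurable (Real.toNNReal q : ℝ≥0∞)
        rw [h1, mul_one, ← hc] at this
        exact absurd (lt_of_lt_of_le hcq this) (lt_irrefl c)
    · have : {y | c < (Real.toNNReal q : ℝ≥0∞) ∧ (Real.toNNReal q : ℝ≥0∞) ≤ f y} = ∅ := by
        ext y; simp only [mem_setOf_eq, mem_empty_iff_false, iff_false]
        exact fun h => hcq h.1
      simp [this]
  -- lower part
  have hlow : ν {y | f y < c} = 0 := by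
    have hsub : {y | f y < c} ⊆ ⋃ q : ℚ,
        {y | f y ≤ (Real.toNNReal q : ℝ≥0∞) ∧ (Real.toNNReal q : ℝ≥0∞) < c} := by
      intro y hy
      obtain ⟨q, _, hq1, hq2⟩ := ENNReal.lt_iff_exists_rat_btwn.1 hy
      exact mem_iUnion.2 ⟨q, hq1.le, hq2⟩
    refine measure_mono_null hsub (measure_iUnion_null fun q => ?_)
    by_cases hqc : (Real.toNNReal q : ℝ≥0∞) < c
    · have hm : MeasurableSet {y | f y ≤ (Real.toNNReal q : ℝ≥0∞)} :=
        measurableSet_le hf measurable_const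
      rcases h01 _ hm with h0 | h1
      · exact measure_mono_null (fun y hy => hy.1) h0
      · exfalso
        have hcompl : ν {y | f y ≤ (Real.toNNReal q : ℝ≥0∞)}ᶜ = 0 := by
          rw [measure_compl hm (measure_ne_top ν _), h1, measure_univ, tsub_self]
        have hsplit := (lintegral_add_compl (μ := ν) f hm).symm
        have h1' : ∫⁻ y in {y | f y ≤ (Real.toNNReal q : ℝ≥0∞)}, f y ∂ν
            ≤ (Real.toNNReal q : ℝ≥0∞) := by
          calc ∫⁻ y in {y | f y ≤ (Real.toNNReal q : ℝ≥0∞)}, f y ∂ν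
              ≤ ∫⁻ _ in {y | f y ≤ (Real.toNNReal q : ℝ≥0∞)}, (Real.toNNReal q : ℝ≥0∞) ∂ν :=
                setLIntegral_mono measurable_const (fun y hy => hy)
            _ = (Real.toNNReal q : ℝ≥0∞) * ν {y | f y ≤ (Real.toNNReal q : ℝ≥0∞)} :=
                setLIntegral_const _ _
            _ ≤ (Real.toNNReal q : ℝ≥0∞) := by rw [h1, mul_one]
        have h2' : ∫⁻ y in {y | f y ≤ (Real.toNNReal q : ℝ≥0∞)}ᶜ, f y ∂ν = 0 :=
          setLIntegral_measure_zero _ _ hcompl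
        have : c ≤ (Real.toNNReal q : ℝ≥0∞) := by
          rw [hc, hsplit, h2', add_zero]; exact h1'
        exact absurd (lt_of_lt_of_le hqc this) (lt_irrefl _)
    · have : {y | f y ≤ (Real.toNNReal q : ℝ≥0∞) ∧ (Real.toNNReal q : ℝ≥0∞) < c} = ∅ := by
        ext y; simp only [mem_setOf_eq, mem_empty_iff_false, iff_false]
        exact fun h => hqc h.2
      simp [this]
  have : ν {y | f y ≠ c} = 0 := by
    refine measure_mono_null (fun y hy => ?_) (measure_union_null hlow hup)
    rcases lt_or_gt_of_ne hy with h | h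
    · exact Or.inl h
    · exact Or.inr h
  exact this

/-- A bounded measurable `ℝ≥0∞`-valued function whose second moment equals the square of
its first moment is a.e. constant. -/
lemma aeconst_of_sq_eq {Y : Type*} [MeasurableSpace Y] (ν : Measure Y)
    [IsProbabilityMeasure ν]
    {f : Y → ℝ≥0∞} (hf : Measurable f) (hf1 : ∀ y, f y ≤ 1)
    (hvar : ∫⁻ y, f y * f y ∂ν = (∫⁻ y, f y ∂ν) * (∫⁻ y, f y ∂ν)) :
    f =ᵐ[ν] fun _ => ∫⁻ y, f y ∂ν := by
  set c := ∫⁻ y, f y ∂ν with hc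
  have hc1 : c ≤ 1 := by
    calc c ≤ ∫⁻ _, 1 ∂ν := lintegral_mono hf1
    _ = 1 := by simp
  have hcne : c ≠ ∞ := (lt_of_le_of_lt hc1 ENNReal.one_lt_top).ne
  have hfne : ∀ y, f y ≠ ∞ := fun y => (lt_of_le_of_lt (hf1 y) ENNReal.one_lt_top).ne
  set F : Y → ℝ := fun y => (f y).toReal with hF
  have hFmeas : Measurable F := hf.ennreal_toReal
  have hFbd : ∀ y, F y ≤ 1 := fun y => by
    rw [hF]; exact ENNReal.toReal_le_of_le_ofReal one_pos.le (by simpa using hf1 y)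
  have hFnn : ∀ y, 0 ≤ F y := fun y => ENNReal.toReal_nonneg
  have hFint : Integrable F ν := by
    refine (integrable_const (1 : ℝ)).mono' hFmeas.aestronglyMeasurable ?_
    filter_upwards with y
    rw [Real.norm_eq_abs, abs_of_nonneg (hFnn y)]; exact hFbd y
  have hF2int : Integrable (fun y => F y * F y) ν := by
    refine (integrable_const (1 : ℝ)).mono' (hFmeas.mul hFmeas).aestronglyMeasurable ?_
    filter_upwards with y
    rw [Real.norm_eq_abs, abs_of_nonneg (mul_nonneg (hFnn y) (hFnn y))]
    calc F y * F y ≤ 1 * 1 := mul_le_mul (hFbd y) (hFbd y) (hFnn y) one_pos.le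
    _ = 1 := one_mul 1
  have hIF : ∫ y, F y ∂ν = c.toReal := by
    rw [hF]
    rw [integral_toReal hf.aemeasurable
      (Eventually.of_forall fun y => lt_of_le_of_lt (hf1 y) ENNReal.one_lt_top)]
  have hIF2 : ∫ y, F y * F y ∂ν = c.toReal * c.toReal := by
    have h1 : ∀ y, F y * F y = ((f y) * (f y)).toReal := fun y =>
      (ENNReal.toReal_mul).symm
    rw [show (fun y => F y * F y) = fun y => ((f y) * (f y)).toReal from funext h1]
    rw [integral_toReal (f := fun y => f y * f y) (hf.mul hf).aemeasurable
      (Eventually.of_forall fun y => ENNReal.mul_lt_top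
        (lt_of_le_of_lt (hf1 y) ENNReal.one_lt_top) (lt_of_le_of_lt (hf1 y) ENNReal.one_lt_top))]
    rw [hvar, ENNReal.toReal_mul]
  set m := c.toReal with hm
  have hGint : Integrable (fun y => (F y - m) ^ 2) ν := by
    have : (fun y => (F y - m) ^ 2)
        = fun y => F y * F y - (2 * m) * F y + m ^ 2 := by
      funext y; ring
    rw [this]
    exact (hF2int.sub (hFint.const_mul (2 * m))).add (integrable_const (m ^ 2))
  have hIG : ∫ y, (F y - m) ^ 2 ∂ν = 0 := by
    have hexp : (fun y => (F y - m) ^ 2)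
        = fun y => F y * F y - (2 * m) * F y + m ^ 2 := by
      funext y; ring
    have hsub : Integrable (fun y => F y * F y - 2 * m * F y) ν := by
      exact hF2int.sub (hFint.const_mul (2 * m))
    rw [hexp, integral_add hsub (integrable_const (m ^ 2)),
      integral_sub hF2int (hFint.const_mul (2 * m)), integral_const_mul, hIF, hIF2,
      integral_const, probReal_univ]
    simp only [ENNReal.toReal_one, smul_eq_mul, one_mul]
    ring
  have hG0 : (fun y => (F y - m) ^ 2) =ᵐ[ν] 0 :=
    (integral_eq_zero_iff_of_nonneg (fun y => sq_nonneg _) hGint).1 hIG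
  filter_upwards [hG0] with y hy
  have : F y = m := by
    have h2 : (F y - m) ^ 2 = 0 := hy
    have := pow_eq_zero_iff (n := 2) (by norm_num) |>.1 h2
    linarith [sub_eq_zero.1 this]
  calc f y = ENNReal.ofReal (F y) := by rw [hF, ENNReal.ofReal_toReal (hfne y)]
  _ = ENNReal.ofReal m := by rw [this]
  _ = c := by rw [hm, ENNReal.ofReal_toReal hcne]

theorem stmt5 {X Y G : Type*} [MeasurableSpace X] [StandardBorelSpace X]
    [MeasurableSpace Y] [StandardBorelSpace Y] [Group G]
    (μ : Measure X) [IsProbabilityMeasure μ]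
    -- the action of `G` on `X` by measurable measure-preserving bijections
    (a : G → X → X) (ha1 : a 1 = id) (hamul : ∀ g h : G, a (g * h) = a g ∘ a h)
    (hameas : ∀ g : G, Measurable (a g))
    (hamp : ∀ g : G, MeasurePreserving (a g) μ μ)
    -- the `G`-invariant factor map
    (π : X → Y) (hπ : Measurable π) (hπinv : ∀ (g : G) (x : X), π (a g x) = π x)
    (ν : Measure Y) (hν : ν = μ.map π)
    -- the disintegration of `μ` over `π`
    (κ : Y → Measure X) (hκprob : ∀ y, IsProbabilityMeasure (κ y))
    (hκmeas : ∀ A : Set X, MeasurableSet A → Measurable (fun y => κ y A))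
    (hκdis : ∀ A : Set X, MeasurableSet A → μ A = ∫⁻ y, κ y A ∂ν)
    (hκfib : ∀ᵐ y ∂ν, κ y (π ⁻¹' {y}) = 1)
    -- a.e. fiber measure is `G`-invariant and `G`-ergodic
    (hκerg : ∀ᵐ y ∂ν, (∀ g : G, MeasurePreserving (a g) (κ y) (κ y)) ∧
      (∀ A : Set X, MeasurableSet A → (∀ g : G, κ y (symmDiff (a g ⁻¹' A) A) = 0) →
        κ y A = 0 ∨ κ y A = 1))
    -- the relatively independent self-joining of `μ` over `π`
    (θ : Measure (X × X))
    (hθ : ∀ C : Set (X × X), MeasurableSet C → θ C = ∫⁻ y, ((κ y).prod (κ y)) C ∂ν) :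
    ((∀ A : Set X, MeasurableSet A → (∀ g : G, μ (symmDiff (a g ⁻¹' A) A) = 0) →
        μ A = 0 ∨ μ A = 1) ↔ θ = μ.prod μ) := by
  haveI : IsProbabilityMeasure ν := hν ▸ Measure.isProbabilityMeasure_map hπ.aemeasurable
  constructor
  · -- ergodic ⇒ θ = μ × μ
    intro herg
    have h01 : ∀ B : Set Y, MeasurableSet B → ν B = 0 ∨ ν B = 1 := by
      intro B hB
      have hpre : ∀ g : G, a g ⁻¹' (π ⁻¹' B) = π ⁻¹' B := by
        intro g; ext x
        simp [Set.mem_preimage, hπinv g x]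
      have h := herg (π ⁻¹' B) (hπ hB) (fun g => by rw [hpre g, symmDiff_self]; simp)
      rw [hν, Measure.map_apply hπ hB]
      exact h
    have hconst : ∀ A : Set X, MeasurableSet A → (fun y => κ y A) =ᵐ[ν] fun _ => μ A := by
      intro A hA
      have h := aeconst_of_zeroOne ν h01 (hκmeas A hA)
        (fun y => by haveI := hκprob y; exact prob_le_one)
      rwa [← hκdis A hA] at h
    refine (Measure.prod_eq fun s t hs ht => ?_).symm
    rw [hθ _ (hs.prod ht)]
    calc ∫⁻ y, ((κ y).prod (κ y)) (s ×ˢ t) ∂ν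
        = ∫⁻ y, κ y s * κ y t ∂ν := by
          refine lintegral_congr fun y => ?_
          haveI := hκprob y
          exact Measure.prod_prod s t
      _ = ∫⁻ _, μ s * μ t ∂ν := lintegral_congr_ae ((hconst s hs).mul (hconst t ht))
      _ = μ s * μ t := by simp
  · -- θ = μ × μ ⇒ ergodic
    intro hprod A hA hAinv
    have key : ∀ B : Set X, MeasurableSet B → (fun y => κ y B) =ᵐ[ν] fun _ => μ B := by
      intro B hB
      have hvar : ∫⁻ y, κ y B * κ y B ∂ν = (∫⁻ y, κ y B ∂ν) * (∫⁻ y, κ y B ∂ν) := by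
        have h2 : ∫⁻ y, κ y B * κ y B ∂ν = ∫⁻ y, ((κ y).prod (κ y)) (B ×ˢ B) ∂ν := by
          refine lintegral_congr fun y => ?_
          haveI := hκprob y
          exact (Measure.prod_prod B B).symm
        rw [h2, ← hθ _ (hB.prod hB), hprod, Measure.prod_prod, ← hκdis B hB]
      have h := aeconst_of_sq_eq ν (hκmeas B hB)
        (fun y => by haveI := hκprob y; exact prob_le_one) hvar
      rwa [← hκdis B hB] at h
    obtain ⟨s, hs⟩ := (MeasurableSpace.countable_countableGeneratingSet (α := X)).exists_eq_range
      ⟨∅, MeasurableSpace.empty_mem_countableGeneratingSet⟩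
    set S : Set (Set X) := Set.range (fun F : Finset ℕ => ⋂ i ∈ F, s i) with hS
    have hScount : S.Countable := countable_range _
    have hsmeas : ∀ i, MeasurableSet (s i) := fun i =>
      MeasurableSpace.measurableSet_countableGeneratingSet (hs ▸ mem_range_self i)
    have hSmeas : ∀ t ∈ S, MeasurableSet t := by
      rintro t ⟨F, rfl⟩
      exact Finset.measurableSet_biInter F (fun i _ => hsmeas i)
    have hgen : ‹MeasurableSpace X› = MeasurableSpace.generateFrom S := by
      refine le_antisymm ?_ (MeasurableSpace.generateFrom_le hSmeas)
      conv_lhs => rw [← MeasurableSpace.generateFrom_countableGeneratingSet (α := X)]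
      refine MeasurableSpace.generateFrom_le fun t ht => ?_
      rw [hs] at ht
      obtain ⟨i, rfl⟩ := ht
      apply MeasurableSpace.measurableSet_generateFrom
      exact ⟨{i}, by simp⟩
    have hpi : IsPiSystem S := by
      rintro t ⟨F, rfl⟩ u ⟨F', rfl⟩ -
      refine ⟨F ∪ F', ?_⟩
      ext x
      simp [Finset.mem_union, or_imp, forall_and]
    have haeS : ∀ᵐ y ∂ν, ∀ t ∈ S, κ y t = μ t :=
      (ae_ball_iff hScount).2 fun t ht => key t (hSmeas t ht)
    haveI : (ae ν).NeBot := ae_neBot.2 (IsProbabilityMeasure.ne_zero ν)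
    obtain ⟨y, hy1, hy2, hy3⟩ := (haeS.and hκerg).exists
    haveI := hκprob y
    have hκμ : κ y = μ := by
      refine ext_of_generate_finite S hgen hpi (fun t ht => hy1 t ht) ?_
      simp
    rcases hy3 A hA (fun g => by rw [hκμ]; exact hAinv g) with h | h
    · left; rwa [hκμ] at h
    · right; rwa [hκμ] at h
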